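/- Fix 0 < δ < 1/5, 0 < r ≤ R, σ ∈ [r, R], and set τ = r. Let F = (1/2)(1 + erf(τ/(σ√2))). Suppose F_m ∈ [(1/2)(1 + erf((1-δ)r/(√2R))), (1/2)(1 + erf(1))] satisfies |F - F_m| ≤ δr/(√(2π)R). Define Λ = τ/(√2 · erf⁻¹(2F_m - 1)). Then |σ - Λ| ≤ 2√e · R · δ. -/

import Mathlib

set_option maxHeartbeats 1000000


/-- The Gaussian error function. -/
noncomputable def erf (x : ℝ) : ℝ :=
  (2 / Real.sqrt Real.pi) * ∫ t in (0:ℝ)..x, Real.exp (-t ^ 2)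

/-- The inverse of the Gaussian error function. -/
noncomputable def erfinv : ℝ → ℝ := Function.invFun erf

private lemma cont_gauss : Continuous (fun t : ℝ => Real.exp (-t ^ 2)) := by
  continuity

private lemma erf_sub (x y : ℝ) :
    erf x - erf y = (2 / Real.sqrt Real.pi) * ∫ t in y..x, Real.exp (-t ^ 2) := by
  have h1 : IntervalIntegrable (fun t : ℝ => Real.exp (-t ^ 2)) MeasureTheory.volume 0 y :=
    cont_gauss.intervalIntegrable 0 y
  have h2 : IntervalIntegrable (fun t : ℝ => Real.exp (-t ^ 2)) MeasureTheory.volume y x :=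
    cont_gauss.intervalIntegrable y x
  have h := intervalIntegral.integral_add_adjacent_intervals h1 h2
  unfold erf
  rw [← h]; ring

private lemma erf_strictMono : StrictMono erf := by
  intro y x hyx
  have h : 0 < ∫ t in y..x, Real.exp (-t ^ 2) :=
    intervalIntegral.intervalIntegral_pos_of_pos (cont_gauss.intervalIntegrable y x)
      (fun t => Real.exp_pos _) hyx
  have hπ : 0 < Real.sqrt Real.pi := Real.sqrt_pos.mpr Real.pi_pos
  have h2 : 0 < erf x - erf y := by
    rw [erf_sub]
    exact mul_pos (by positivity) h
  linarith

private lemma erf_continuous : Continuous erf := by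
  have h : Continuous fun x : ℝ => ∫ t in (0:ℝ)..x, Real.exp (-t ^ 2) := by
    rw [continuous_iff_continuousAt]
    exact fun x => (cont_gauss.integral_hasStrictDerivAt 0 x).hasDerivAt.continuousAt
  exact continuous_const.mul h

private lemma erf_key {x y : ℝ} (hy : 0 ≤ y) (hxy : y ≤ x) :
    (x - y) * Real.exp (-x ^ 2) ≤ (Real.sqrt Real.pi / 2) * (erf x - erf y) := by
  have hπ : 0 < Real.sqrt Real.pi := Real.sqrt_pos.mpr Real.pi_pos
  have hint : (x - y) * Real.exp (-x ^ 2) ≤ ∫ t in y..x, Real.exp (-t ^ 2) := by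
    have h := intervalIntegral.integral_mono_on (μ := MeasureTheory.volume)
      (f := fun _ : ℝ => Real.exp (-x ^ 2)) (g := fun t : ℝ => Real.exp (-t ^ 2)) hxy
      (intervalIntegrable_const) (cont_gauss.intervalIntegrable y x)
      (fun t ht => by
        apply Real.exp_le_exp.mpr
        have h1 := ht.1; have h2 := ht.2
        nlinarith)
    simpa [smul_eq_mul, mul_comm] using h
  have heq : (Real.sqrt Real.pi / 2) * (erf x - erf y)
      = ∫ t in y..x, Real.exp (-t ^ 2) := by
    rw [erf_sub]
    field_simp
  rw [heq]; exact hint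

theorem stmt_14 (r R δ σ Fm : ℝ) (hδ0 : 0 < δ) (hδ : δ < 1 / 5)
    (hr : 0 < r) (hrR : r ≤ R) (hσ : σ ∈ Set.Icc r R)
    (hFmIcc : Fm ∈ Set.Icc ((1 / 2) * (1 + erf ((1 - δ) * r / (Real.sqrt 2 * R))))
      ((1 / 2) * (1 + erf 1)))
    (hFm : |(1 / 2) * (1 + erf (r / (σ * Real.sqrt 2))) - Fm| ≤
      δ * r / (Real.sqrt (2 * Real.pi) * R)) :
    |σ - r / (Real.sqrt 2 * erfinv (2 * Fm - 1))| ≤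
      2 * Real.sqrt (Real.exp 1) * R * δ := by
  obtain ⟨hσr, hσR⟩ := hσ
  have hσ0 : 0 < σ := lt_of_lt_of_le hr hσr
  have hR0 : 0 < R := lt_of_lt_of_le hr hrR
  have hs2 : (0:ℝ) < Real.sqrt 2 := by positivity
  have hs2m : Real.sqrt 2 * Real.sqrt 2 = 2 := Real.mul_self_sqrt (by norm_num)
  have hs2ge1 : (1:ℝ) ≤ Real.sqrt 2 := by
    rw [show (1:ℝ) = Real.sqrt 1 from Real.sqrt_one.symm]
    exact Real.sqrt_le_sqrt (by norm_num)
  have hπ : 0 < Real.sqrt Real.pi := Real.sqrt_pos.mpr Real.pi_pos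
  set se := Real.sqrt (Real.exp 1) with hsedef
  have hse0 : 0 < se := Real.sqrt_pos.mpr (Real.exp_pos 1)
  have hsem : se * se = Real.exp 1 := Real.mul_self_sqrt (Real.exp_pos 1).le
  have hseh : Real.exp ((1:ℝ)/2) = se := Real.exp_half 1
  have hse2 : se ≤ 2 := by
    have h4 : Real.sqrt 4 = 2 := by
      rw [show (4:ℝ) = 2 ^ 2 by norm_num, Real.sqrt_sq (by norm_num : (0:ℝ) ≤ 2)]
    rw [hsedef, ← h4]
    exact Real.sqrt_le_sqrt (by linarith [Real.exp_one_lt_d9])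
  set A := (1 - δ) * r / (Real.sqrt 2 * R) with hAdef
  have hA0 : 0 < A := by
    have : (0:ℝ) < 1 - δ := by linarith
    positivity
  have hA1 : A ≤ 1 := by
    rw [hAdef, div_le_one (by positivity)]
    have f1 : 1 * R ≤ Real.sqrt 2 * R := mul_le_mul_of_nonneg_right hs2ge1 hR0.le
    have f2 : 0 ≤ δ * r := mul_nonneg hδ0.le hr.le
    linarith
  -- obtain y with erf y = 2 Fm - 1
  have hmem : 2 * Fm - 1 ∈ Set.Icc (erf A) (erf 1) := by
    constructor
    · linarith [hFmIcc.1]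
    · linarith [hFmIcc.2]
  obtain ⟨y, ⟨hya, hy1⟩, hy⟩ :=
    intermediate_value_Icc hA1 erf_continuous.continuousOn hmem
  have hy0 : 0 < y := lt_of_lt_of_le hA0 hya
  have hinv : erfinv (2 * Fm - 1) = y := by
    rw [← hy]
    exact Function.leftInverse_invFun erf_strictMono.injective y
  rw [hinv]
  set x := r / (σ * Real.sqrt 2) with hxdef
  have hx0 : 0 < x := by rw [hxdef]; positivity
  have hxR : r / (Real.sqrt 2 * R) ≤ x := by
    rw [hxdef, div_le_div_iff₀ (by positivity) (by positivity)]
    linarith [mul_le_mul_of_nonneg_left hσR (mul_nonneg hr.le hs2.le)]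
  have hx2 : x ≤ 1 / Real.sqrt 2 := by
    rw [hxdef, div_le_div_iff₀ (by positivity) hs2]
    linarith [mul_le_mul_of_nonneg_right hσr hs2.le]
  set c := max x y with hcdef
  have hc0 : 0 < c := lt_max_of_lt_left hx0
  -- bound on |erf x - erf y|
  have hNum : Real.sqrt (2 * Real.pi) = Real.sqrt 2 * Real.sqrt Real.pi :=
    Real.sqrt_mul (by norm_num) _
  have hΔ : |erf x - erf y| ≤ 2 * δ * r / (Real.sqrt 2 * Real.sqrt Real.pi * R) := by
    have heq : erf x - erf y = 2 * ((1/2) * (1 + erf x) - Fm) := by rw [hy]; ring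
    have heq2 : 2 * δ * r / (Real.sqrt 2 * Real.sqrt Real.pi * R)
        = 2 * (δ * r / (Real.sqrt 2 * Real.sqrt Real.pi * R)) := by ring
    rw [hNum] at hFm
    rw [heq, abs_mul, abs_two, heq2]
    linarith
  -- mean value type bound
  have hkey : |y - x| * Real.exp (-c ^ 2) ≤ (Real.sqrt Real.pi / 2) * |erf x - erf y| := by
    rcases le_total x y with h | h
    · rw [abs_of_nonneg (sub_nonneg.mpr h), hcdef, max_eq_right h, abs_sub_comm,
        abs_of_nonneg (sub_nonneg.mpr (erf_strictMono.monotone h))]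
      exact erf_key hx0.le h
    · rw [abs_of_nonpos (sub_nonpos.mpr h), hcdef, max_eq_left h,
        abs_of_nonneg (sub_nonneg.mpr (erf_strictMono.monotone h))]
      have := erf_key hy0.le h
      linarith
  have hexp_mul : Real.exp (-c ^ 2) * Real.exp (c ^ 2) = 1 := by
    rw [← Real.exp_add]; simp
  have hyx : |y - x| ≤ Real.exp (c ^ 2) * ((Real.sqrt Real.pi / 2) * |erf x - erf y|) := by
    calc |y - x| = (|y - x| * Real.exp (-c ^ 2)) * Real.exp (c ^ 2) := by
          rw [mul_assoc, hexp_mul, mul_one]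
      _ ≤ ((Real.sqrt Real.pi / 2) * |erf x - erf y|) * Real.exp (c ^ 2) :=
          mul_le_mul_of_nonneg_right hkey (Real.exp_pos _).le
      _ = Real.exp (c ^ 2) * ((Real.sqrt Real.pi / 2) * |erf x - erf y|) := by ring
  have hyx2 : |y - x| ≤ Real.exp (c ^ 2) * (δ * r) / (Real.sqrt 2 * R) := by
    have h3 : |y - x| ≤ Real.exp (c ^ 2) *
        ((Real.sqrt Real.pi / 2) * (2 * δ * r / (Real.sqrt 2 * Real.sqrt Real.pi * R))) := by
      refine le_trans hyx ?_
      gcongr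
    have heq3 : Real.exp (c ^ 2) *
        ((Real.sqrt Real.pi / 2) * (2 * δ * r / (Real.sqrt 2 * Real.sqrt Real.pi * R)))
        = Real.exp (c ^ 2) * (δ * r) / (Real.sqrt 2 * R) := by
      field_simp
    rw [heq3] at h3; exact h3
  -- rewrite the goal
  have h5 : σ - r / (Real.sqrt 2 * y) = r * (y - x) / (Real.sqrt 2 * x * y) := by
    rw [hxdef]
    field_simp
  rw [h5, abs_div, abs_of_pos (show (0:ℝ) < Real.sqrt 2 * x * y by positivity), abs_mul,
    abs_of_pos hr, div_le_iff₀ (by positivity)]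
  -- core inequality
  have hcore : Real.exp (c ^ 2) * r ^ 2 ≤ 4 * se * R ^ 2 * (x * y) := by
    have hden : (Real.sqrt 2 * R) * (Real.sqrt 2 * R) = 2 * R ^ 2 := by
      calc (Real.sqrt 2 * R) * (Real.sqrt 2 * R) = Real.sqrt 2 * Real.sqrt 2 * R ^ 2 := by ring
        _ = 2 * R ^ 2 := by rw [hs2m]
    rcases le_or_gt y (1 / Real.sqrt 2) with hB | hB
    · -- both ≤ 1/√2
      have hc : c ≤ 1 / Real.sqrt 2 := max_le hx2 hB
      have h12 : (1 / Real.sqrt 2) * (1 / Real.sqrt 2) = 1 / 2 := by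
        rw [div_mul_div_comm, one_mul, hs2m]
      have hc2 : c ^ 2 ≤ 1 / 2 := by
        have f1 := mul_self_le_mul_self hc0.le hc
        linarith [f1, h12.le, h12.ge]
      have hexpA : Real.exp (c ^ 2) ≤ se := by
        rw [← hseh]
        exact Real.exp_le_exp.mpr hc2
      have hxyA : ((1 - δ) * r ^ 2) / (2 * R ^ 2) ≤ x * y := by
        have hmm : (r / (Real.sqrt 2 * R)) * ((1 - δ) * r / (Real.sqrt 2 * R)) ≤ x * y := by
          apply mul_le_mul hxR hya (le_of_lt hA0) hx0.le
        calc ((1 - δ) * r ^ 2) / (2 * R ^ 2)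
            = (r / (Real.sqrt 2 * R)) * ((1 - δ) * r / (Real.sqrt 2 * R)) := by
              rw [div_mul_div_comm, hden]; ring
          _ ≤ x * y := hmm
      have h10 : 4 * se * R ^ 2 * (((1 - δ) * r ^ 2) / (2 * R ^ 2))
          ≤ 4 * se * R ^ 2 * (x * y) :=
        mul_le_mul_of_nonneg_left hxyA (by positivity)
      have h11 : 4 * se * R ^ 2 * (((1 - δ) * r ^ 2) / (2 * R ^ 2))
          = 2 * se * (1 - δ) * r ^ 2 := by
        field_simp; ring
      rw [h11] at h10
      have h9 : Real.exp (c ^ 2) * r ^ 2 ≤ se * r ^ 2 :=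
        mul_le_mul_of_nonneg_right hexpA (sq_nonneg r)
      have h13 : δ * (se * r ^ 2) ≤ 1 / 5 * (se * r ^ 2) :=
        mul_le_mul_of_nonneg_right hδ.le (mul_nonneg hse0.le (sq_nonneg r))
      have h14 : 0 ≤ se * r ^ 2 := mul_nonneg hse0.le (sq_nonneg r)
      linarith [h9, h10, h13, h14]
    · -- y > 1/√2
      have hc : c ≤ 1 := max_le (hx2.trans (by rw [div_le_one hs2]; exact hs2ge1)) hy1
      have hc2 : c ^ 2 ≤ 1 := by
        have f1 := mul_self_le_mul_self hc0.le hc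
        linarith
      have hexpB : Real.exp (c ^ 2) ≤ se * se := by
        rw [hsem]
        exact Real.exp_le_exp.mpr hc2
      have hxyB : r / (2 * R) ≤ x * y := by
        have hmm : (r / (Real.sqrt 2 * R)) * (1 / Real.sqrt 2) ≤ x * y :=
          mul_le_mul hxR hB.le (by positivity) hx0.le
        calc r / (2 * R) = (r / (Real.sqrt 2 * R)) * (1 / Real.sqrt 2) := by
              rw [div_mul_div_comm]
              rw [show Real.sqrt 2 * R * Real.sqrt 2 = 2 * R by
                calc Real.sqrt 2 * R * Real.sqrt 2 = Real.sqrt 2 * Real.sqrt 2 * R := by ring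
                  _ = 2 * R := by rw [hs2m]]
              ring
          _ ≤ x * y := hmm
      have h10 : 4 * se * R ^ 2 * (r / (2 * R)) ≤ 4 * se * R ^ 2 * (x * y) :=
        mul_le_mul_of_nonneg_left hxyB (by positivity)
      have h11 : 4 * se * R ^ 2 * (r / (2 * R)) = 2 * se * R * r := by
        field_simp; ring
      rw [h11] at h10
      have h9 : Real.exp (c ^ 2) * r ^ 2 ≤ se * se * r ^ 2 :=
        mul_le_mul_of_nonneg_right hexpB (sq_nonneg r)
      have f1 : se * (se * r ^ 2) ≤ 2 * (se * r ^ 2) :=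
        mul_le_mul_of_nonneg_right hse2 (mul_nonneg hse0.le (sq_nonneg r))
      have f2 : 2 * se * r * r ≤ 2 * se * r * R :=
        mul_le_mul_of_nonneg_left hrR (by positivity)
      linarith [h9, h10, f1, f2]
  -- finish
  rw [← mul_le_mul_iff_of_pos_right (show (0:ℝ) < Real.sqrt 2 * R by positivity)]
  have h6 : r * |y - x| * (Real.sqrt 2 * R) ≤ Real.exp (c ^ 2) * (δ * r) * r := by
    have h7 : |y - x| * (Real.sqrt 2 * R) ≤ Real.exp (c ^ 2) * (δ * r) :=
      (le_div_iff₀ (by positivity)).mp hyx2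
    calc r * |y - x| * (Real.sqrt 2 * R) = r * (|y - x| * (Real.sqrt 2 * R)) := by ring
      _ ≤ r * (Real.exp (c ^ 2) * (δ * r)) := mul_le_mul_of_nonneg_left h7 hr.le
      _ = Real.exp (c ^ 2) * (δ * r) * r := by ring
  refine le_trans h6 ?_
  have h8 : 2 * se * R * δ * (Real.sqrt 2 * x * y) * (Real.sqrt 2 * R)
      = δ * (4 * se * R ^ 2 * (x * y)) := by
    calc 2 * se * R * δ * (Real.sqrt 2 * x * y) * (Real.sqrt 2 * R)
        = (Real.sqrt 2 * Real.sqrt 2) * (se * R ^ 2 * δ * (x * y)) * 2 := by ring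
      _ = δ * (4 * se * R ^ 2 * (x * y)) := by rw [hs2m]; ring
  rw [h8]
  have := mul_le_mul_of_nonneg_left hcore hδ0.le
  calc Real.exp (c ^ 2) * (δ * r) * r = δ * (Real.exp (c ^ 2) * r ^ 2) := by ring
    _ ≤ δ * (4 * se * R ^ 2 * (x * y)) := this
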